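/- Let B ∈ ℂ^{m×n}, W ∈ ℂ^{n×m}, let k be a natural number with k = ind(WB), let H be the Moore–Penrose inverse of B, let D be the W-weighted Drazin inverse of B, and let Z be a minimal rank W-weighted right weak Drazin inverse of B. Then W·Z·W·B·H = W·Z·W·B·(W·D·W·B·H). -/
import Mathlib


open Matrix

/-- The index of a square complex matrix: the least `j` with `rank (M^j) = rank (M^(j+1))`. -/
noncomputable def matIndex {p : ℕ} (M : Matrix (Fin p) (Fin p) ℂ) : ℕ :=
  sInf {j : ℕ | (M ^ j).rank = (M ^ (j + 1)).rank}

/-- The column space of a complex matrix: the range of `v ↦ M *ᵥ v`. -/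
noncomputable def colSpace {a b : ℕ} (M : Matrix (Fin a) (Fin b) ℂ) :
    Submodule ℂ (Fin a → ℂ) :=
  LinearMap.range M.mulVecLin

/-- The null space of a complex matrix: the kernel of `v ↦ M *ᵥ v`. -/
noncomputable def nullSpace {a b : ℕ} (M : Matrix (Fin a) (Fin b) ℂ) :
    Submodule ℂ (Fin b → ℂ) :=
  LinearMap.ker M.mulVecLin

/-- If `ker f ≤ ker g`, then `g` factors through `f`. -/
theorem exists_comp_of_ker_le_ker {V W₁ W₂ : Type*} [AddCommGroup V] [Module ℂ V]
    [AddCommGroup W₁] [Module ℂ W₁] [AddCommGroup W₂] [Module ℂ W₂]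
    (f : V →ₗ[ℂ] W₁) (g : V →ₗ[ℂ] W₂) (hle : LinearMap.ker f ≤ LinearMap.ker g) :
    ∃ h : W₁ →ₗ[ℂ] W₂, g = h ∘ₗ f := by
  let g' : (V ⧸ LinearMap.ker f) →ₗ[ℂ] W₂ := (LinearMap.ker f).liftQ g hle
  let φ : LinearMap.range f →ₗ[ℂ] W₂ := g' ∘ₗ (f.quotKerEquivRange.symm : _ →ₗ[ℂ] _)
  obtain ⟨h, hh⟩ := φ.exists_extend
  refine ⟨h, ?_⟩
  ext v
  have h1 : h (f v) = φ ⟨f v, LinearMap.mem_range_self f v⟩ := by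
    have := LinearMap.congr_fun hh ⟨f v, LinearMap.mem_range_self f v⟩
    simpa using this
  have h2 : f.quotKerEquivRange.symm ⟨f v, LinearMap.mem_range_self f v⟩
      = Submodule.Quotient.mk v := f.quotKerEquivRange_symm_apply_image v _
  simp only [LinearMap.comp_apply, h1, φ, LinearMap.coe_comp, Function.comp_apply,
    LinearEquiv.coe_coe, h2]
  simp [g', Submodule.liftQ_apply]

/-- Matrix version: if `nullSpace M ≤ nullSpace Z`, then `Z = T * M` for some `T`. -/
theorem exists_left_factor {a b c : ℕ} (M : Matrix (Fin b) (Fin c) ℂ)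
    (Z : Matrix (Fin a) (Fin c) ℂ)
    (hle : LinearMap.ker M.mulVecLin ≤ LinearMap.ker Z.mulVecLin) :
    ∃ T : Matrix (Fin a) (Fin b) ℂ, Z = T * M := by
  obtain ⟨h, hh⟩ := exists_comp_of_ker_le_ker M.mulVecLin Z.mulVecLin hle
  refine ⟨LinearMap.toMatrix' h, ?_⟩
  apply Matrix.toLin'.injective
  rw [Matrix.toLin'_mul, Matrix.toLin'_toMatrix', Matrix.toLin'_apply', Matrix.toLin'_apply', hh]

/-- **Lemma 3.11.** `W·Z·W·B·H = W·Z·W·B·(W·D·W·B·H)`, where `W·D·W·B·H` is the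
W-weighted DMP inverse of `B`. -/
theorem weighted_weak_DMP_via_DMP {m n : ℕ}
    (B : Matrix (Fin m) (Fin n) ℂ) (W : Matrix (Fin n) (Fin m) ℂ)
    (k : ℕ) (hk : k = matIndex (W * B))
    (H : Matrix (Fin n) (Fin m) ℂ)
    (hH1 : B * H * B = B) (hH2 : H * B * H = H)
    (hH3 : (B * H)ᴴ = B * H) (hH4 : (H * B)ᴴ = H * B)
    (D : Matrix (Fin m) (Fin n) ℂ)
    (hD1 : D * W * B * W * D = D) (hD2 : B * W * D = D * W * B)
    (hD3 : (B * W) ^ (k + 1) * D * W = (B * W) ^ k)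
    (Z : Matrix (Fin m) (Fin n) ℂ)
    (hZ1 : W * (B * W) ^ (k + 1) * Z = (W * B) ^ k)
    (hZ2 : Z.rank = ((W * B) ^ k).rank) :
    W * Z * W * B * H = W * Z * W * B * (W * D * W * B * H) := by
  -- swap lemma
  have hswap : ∀ j : ℕ, W * (B * W) ^ j = (W * B) ^ j * W := by
    intro j
    induction j with
    | zero => simp
    | succ j ih =>
      rw [pow_succ, pow_succ, ← Matrix.mul_assoc, ih]
      simp only [Matrix.mul_assoc]
  -- key Drazin identity: (WB)^(k+1) * (W*D*W*B) = (WB)^(k+1)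
  have hkey : (W * B) ^ (k + 1) * (W * D * W * B) = (W * B) ^ (k + 1) := by
    have h1 : W * ((B * W) ^ (k + 1) * D * W) * B = W * (B * W) ^ k * B := by
      rw [hD3]
    have h2 : W * (B * W) ^ k * B = (W * B) ^ (k + 1) := by
      rw [hswap, Matrix.mul_assoc, ← pow_succ]
    calc (W * B) ^ (k + 1) * (W * D * W * B)
        = (W * B) ^ (k + 1) * W * D * W * B := by simp only [Matrix.mul_assoc]
      _ = W * ((B * W) ^ (k + 1) * D * W) * B := by
          rw [← hswap]; simp only [Matrix.mul_assoc]
      _ = (W * B) ^ (k + 1) := by rw [h1, h2]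
  -- ker ((WB)^k) ≤ ker Z
  have hZ1' : (W * B) ^ (k + 1) * W * Z = (W * B) ^ k := by
    rw [← hZ1, ← hswap]
  have hker1 : LinearMap.ker Z.mulVecLin ≤ LinearMap.ker ((W * B) ^ k).mulVecLin := by
    intro v hv
    rw [LinearMap.mem_ker] at hv ⊢
    rw [← hZ1', Matrix.mulVecLin_mul, LinearMap.comp_apply, hv, map_zero]
  have hfd : FiniteDimensional ℂ (LinearMap.ker ((W * B) ^ k).mulVecLin) := by
    infer_instance
  have hkereq : LinearMap.ker Z.mulVecLin = LinearMap.ker ((W * B) ^ k).mulVecLin := by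
    apply Submodule.eq_of_le_of_finrank_eq hker1
    have r1 := Z.mulVecLin.finrank_range_add_finrank_ker
    have r2 := ((W * B) ^ k).mulVecLin.finrank_range_add_finrank_ker
    have hr : Module.finrank ℂ (LinearMap.range Z.mulVecLin)
        = Module.finrank ℂ (LinearMap.range ((W * B) ^ k).mulVecLin) := hZ2
    omega
  obtain ⟨T, hT⟩ := exists_left_factor ((W * B) ^ k) Z (hkereq.ge)
  -- finish
  subst hT
  have : T * (W * B) ^ k * W * B * (W * D * W * B)
      = T * (W * B) ^ k * W * B := by
    calc T * (W * B) ^ k * W * B * (W * D * W * B)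
        = T * ((W * B) ^ (k + 1) * (W * D * W * B)) := by
          rw [pow_succ]; simp only [Matrix.mul_assoc]
      _ = T * (W * B) ^ (k + 1) := by rw [hkey]
      _ = T * (W * B) ^ k * W * B := by rw [pow_succ]; simp only [Matrix.mul_assoc]
  calc W * (T * (W * B) ^ k) * W * B * H
      = W * (T * (W * B) ^ k * W * B) * H := by simp only [Matrix.mul_assoc]
    _ = W * (T * (W * B) ^ k * W * B * (W * D * W * B)) * H := by rw [this]
    _ = W * (T * (W * B) ^ k) * W * B * (W * D * W * B * H) := by
        simp only [Matrix.mul_assoc]
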